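/- Let v1, v2, v3, v4, v5 be five points of ℝ³ in general position (every four of them affinely independent) satisfying: v5 and v4 lie strictly on opposite sides of the plane through v1, v2, v3; v5 and v3 lie strictly on opposite sides of the plane through v1, v2, v4; v5 and v2 lie strictly on the same side of the plane through v1, v3, v4; and v5 and v1 lie strictly on the same side of the plane through v2, v3, v4. Then the open segment from v1 to v2 meets the intrinsic interior of the triangle convexHull ℝ {v3, v4, v5}; that is, (openSegment ℝ v1 v2) ∩ intrinsicInterior ℝ (convexHull ℝ {v3,v4,v5}) ≠ ∅. -/

import Mathlib

open Set

section Helpers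

variable {E : Type*} [NormedAddCommGroup E] [NormedSpace ℝ E]

lemma vanish_on_span (f : E →ᵃ[ℝ] ℝ) {S : Set E} (hS : ∀ x ∈ S, f x = 0) :
    ∀ p ∈ affineSpan ℝ S, f p = 0 := by
  intro p hp
  have hle : affineSpan ℝ S ≤ AffineSubspace.comap f (AffineSubspace.mk' (0:ℝ) ⊥) := by
    rw [affineSpan_le]
    intro x hx
    simp [AffineSubspace.mem_comap, AffineSubspace.mem_mk', hS x hx]
  have := hle hp
  simpa [AffineSubspace.mem_comap, AffineSubspace.mem_mk', sub_eq_zero] using this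

lemma sOppSide_mul_neg (f : E →ᵃ[ℝ] ℝ) {s : AffineSubspace ℝ E} (hf : ∀ p ∈ s, f p = 0)
    {x y : E} (h : s.SOppSide x y) (hx : f x ≠ 0) (hy : f y ≠ 0) : f x * f y < 0 := by
  obtain ⟨p₁, hp₁, p₂, hp₂, hr⟩ := h.1
  have hr' := hr.map f.linear
  rw [AffineMap.linearMap_vsub, AffineMap.linearMap_vsub] at hr'
  rw [hf p₁ hp₁, hf p₂ hp₂] at hr'
  simp only [vsub_eq_sub, sub_zero, zero_sub] at hr'
  rcases hr' with h0 | h0 | ⟨r₁, r₂, hr₁, hr₂, hreq⟩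
  · exact absurd h0 hx
  · exact absurd (neg_eq_zero.mp h0) hy
  · simp only [smul_eq_mul, mul_neg] at hreq
    have h3 : r₁ * (f x * f y) = -(r₂ * (f y * f y)) := by linear_combination f y * hreq
    nlinarith [mul_pos hr₂ (mul_self_pos.mpr hy), hr₁]

lemma sSameSide_mul_pos (f : E →ᵃ[ℝ] ℝ) {s : AffineSubspace ℝ E} (hf : ∀ p ∈ s, f p = 0)
    {x y : E} (h : s.SSameSide x y) (hx : f x ≠ 0) (hy : f y ≠ 0) : 0 < f x * f y := by
  obtain ⟨p₁, hp₁, p₂, hp₂, hr⟩ := h.1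
  have hr' := hr.map f.linear
  rw [AffineMap.linearMap_vsub, AffineMap.linearMap_vsub] at hr'
  rw [hf p₁ hp₁, hf p₂ hp₂] at hr'
  simp only [vsub_eq_sub, sub_zero] at hr'
  rcases hr' with h0 | h0 | ⟨r₁, r₂, hr₁, hr₂, hreq⟩
  · exact absurd h0 hx
  · exact absurd h0 hy
  · simp only [smul_eq_mul] at hreq
    have h3 : r₁ * (f x * f y) = r₂ * (f y * f y) := by linear_combination f y * hreq
    nlinarith [mul_pos hr₂ (mul_self_pos.mpr hy), hr₁]

lemma range_three (p q r : E) : Set.range ![p, q, r] = {p, q, r} := by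
  ext w
  simp [Matrix.range_cons, Matrix.range_cons_empty]
  tauto

lemma mem_span_three (p q r : E) {x y z : ℝ} (h : x + y + z = 1) :
    x • p + y • q + z • r ∈ affineSpan ℝ ({p, q, r} : Set E) := by
  have hw : ∑ i, ![x, y, z] i = 1 := by simp [Fin.sum_univ_three]; linarith
  have hm := affineCombination_mem_affineSpan (k := ℝ) (w := ![x, y, z]) hw ![p, q, r]
  rw [Finset.univ.affineCombination_eq_linear_combination _ _ hw] at hm
  rw [range_three] at hm
  simpa [Fin.sum_univ_three] using hm

end Helpers

attribute [local instance] AffineSubspace.toNormedAddTorsor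

set_option maxHeartbeats 1600000 in
/-- Case (c) of the classification of linear embeddings of K₅: five points in general
position (every four affinely independent) such that `v₅` lies strictly outside exactly
the two faces of the tetrahedron ⟨v₁,v₂,v₃,v₄⟩ containing the edge `v₁v₂` form two
tetrahedra glued along the face ⟨v₃,v₄,v₅⟩, with the open segment `v₁v₂` piercing the
relative interior of the triangle ⟨v₃,v₄,v₅⟩. -/
theorem segment_pierces_triangle_case_c
    (v₁ v₂ v₃ v₄ v₅ : EuclideanSpace ℝ (Fin 3))
    (h₁₂₃₄ : AffineIndependent ℝ ![v₁, v₂, v₃, v₄])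
    (h₁₂₃₅ : AffineIndependent ℝ ![v₁, v₂, v₃, v₅])
    (h₁₂₄₅ : AffineIndependent ℝ ![v₁, v₂, v₄, v₅])
    (h₁₃₄₅ : AffineIndependent ℝ ![v₁, v₃, v₄, v₅])
    (h₂₃₄₅ : AffineIndependent ℝ ![v₂, v₃, v₄, v₅])
    (hA : (affineSpan ℝ ({v₁, v₂, v₃} : Set (EuclideanSpace ℝ (Fin 3)))).SOppSide v₅ v₄)
    (hB : (affineSpan ℝ ({v₁, v₂, v₄} : Set (EuclideanSpace ℝ (Fin 3)))).SOppSide v₅ v₃)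
    (hC : (affineSpan ℝ ({v₁, v₃, v₄} : Set (EuclideanSpace ℝ (Fin 3)))).SSameSide v₅ v₂)
    (hD : (affineSpan ℝ ({v₂, v₃, v₄} : Set (EuclideanSpace ℝ (Fin 3)))).SSameSide v₅ v₁) :
    (openSegment ℝ v₁ v₂ ∩
      intrinsicInterior ℝ (convexHull ℝ ({v₃, v₄, v₅} : Set (EuclideanSpace ℝ (Fin 3))))) ≠ ∅ := by
  classical
  have htop : affineSpan ℝ (Set.range ![v₁, v₂, v₃, v₄]) = ⊤ := by
    rw [h₁₂₃₄.affineSpan_eq_top_iff_card_eq_finrank_add_one]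
    simp [finrank_euclideanSpace]
  let b : AffineBasis (Fin 4) ℝ (EuclideanSpace ℝ (Fin 3)) := ⟨![v₁, v₂, v₃, v₄], h₁₂₃₄, htop⟩
  have hb0 : b 0 = v₁ := rfl
  have hb1 : b 1 = v₂ := rfl
  have hb2 : b 2 = v₃ := rfl
  have hb3 : b 3 = v₄ := rfl
  set a : Fin 4 → ℝ := fun i => b.coord i v₅ with ha
  have hsum : a 0 + a 1 + a 2 + a 3 = 1 := by
    have := b.sum_coord_apply_eq_one v₅
    rw [Fin.sum_univ_four] at this
    exact this
  have hcomb : v₅ = a 0 • v₁ + a 1 • v₂ + a 2 • v₃ + a 3 • v₄ := by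
    have := b.linear_combination_coord_eq_self v₅
    rw [Fin.sum_univ_four, hb0, hb1, hb2, hb3] at this
    exact this.symm
  -- signs of coordinates
  have ha3 : a 3 < 0 := by
    have hf : ∀ p ∈ affineSpan ℝ ({v₁, v₂, v₃} : Set (EuclideanSpace ℝ (Fin 3))),
        b.coord 3 p = 0 := by
      apply vanish_on_span
      rintro x (rfl | rfl | rfl)
      · rw [← hb0]; exact b.coord_apply_ne (by decide)
      · rw [← hb1]; exact b.coord_apply_ne (by decide)
      · rw [← hb2]; exact b.coord_apply_ne (by decide)
    have hx : b.coord 3 v₅ ≠ 0 := by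
      intro h0
      apply hA.2.1
      have h5 : v₅ = a 0 • v₁ + a 1 • v₂ + a 2 • v₃ := by
        rw [hcomb, show a 3 = 0 from h0]; module
      rw [h5]
      exact mem_span_three _ _ _ (by have : a 3 = 0 := h0; linarith)
    have hy : b.coord 3 v₄ ≠ 0 := by rw [← hb3, b.coord_apply_eq]; norm_num
    have hlt := sOppSide_mul_neg _ hf hA hx hy
    rw [← hb3, b.coord_apply_eq] at hlt
    have : a 3 * 1 < 0 := hlt
    linarith
  have ha2 : a 2 < 0 := by
    have hf : ∀ p ∈ affineSpan ℝ ({v₁, v₂, v₄} : Set (EuclideanSpace ℝ (Fin 3))),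
        b.coord 2 p = 0 := by
      apply vanish_on_span
      rintro x (rfl | rfl | rfl)
      · rw [← hb0]; exact b.coord_apply_ne (by decide)
      · rw [← hb1]; exact b.coord_apply_ne (by decide)
      · rw [← hb3]; exact b.coord_apply_ne (by decide)
    have hx : b.coord 2 v₅ ≠ 0 := by
      intro h0
      apply hB.2.1
      have h5 : v₅ = a 0 • v₁ + a 1 • v₂ + a 3 • v₄ := by
        rw [hcomb, show a 2 = 0 from h0]; module
      rw [h5]
      exact mem_span_three _ _ _ (by have : a 2 = 0 := h0; linarith)
    have hy : b.coord 2 v₃ ≠ 0 := by rw [← hb2, b.coord_apply_eq]; norm_num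
    have hlt := sOppSide_mul_neg _ hf hB hx hy
    rw [← hb2, b.coord_apply_eq] at hlt
    have : a 2 * 1 < 0 := hlt
    linarith
  have ha1 : 0 < a 1 := by
    have hf : ∀ p ∈ affineSpan ℝ ({v₁, v₃, v₄} : Set (EuclideanSpace ℝ (Fin 3))),
        b.coord 1 p = 0 := by
      apply vanish_on_span
      rintro x (rfl | rfl | rfl)
      · rw [← hb0]; exact b.coord_apply_ne (by decide)
      · rw [← hb2]; exact b.coord_apply_ne (by decide)
      · rw [← hb3]; exact b.coord_apply_ne (by decide)
    have hx : b.coord 1 v₅ ≠ 0 := by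
      intro h0
      apply hC.2.1
      have h5 : v₅ = a 0 • v₁ + a 2 • v₃ + a 3 • v₄ := by
        rw [hcomb, show a 1 = 0 from h0]; module
      rw [h5]
      exact mem_span_three _ _ _ (by have : a 1 = 0 := h0; linarith)
    have hy : b.coord 1 v₂ ≠ 0 := by rw [← hb1, b.coord_apply_eq]; norm_num
    have hlt := sSameSide_mul_pos _ hf hC hx hy
    rw [← hb1, b.coord_apply_eq] at hlt
    have : 0 < a 1 * 1 := hlt
    linarith
  have ha0 : 0 < a 0 := by
    have hf : ∀ p ∈ affineSpan ℝ ({v₂, v₃, v₄} : Set (EuclideanSpace ℝ (Fin 3))),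
        b.coord 0 p = 0 := by
      apply vanish_on_span
      rintro x (rfl | rfl | rfl)
      · rw [← hb1]; exact b.coord_apply_ne (by decide)
      · rw [← hb2]; exact b.coord_apply_ne (by decide)
      · rw [← hb3]; exact b.coord_apply_ne (by decide)
    have hx : b.coord 0 v₅ ≠ 0 := by
      intro h0
      apply hD.2.1
      have h5 : v₅ = a 1 • v₂ + a 2 • v₃ + a 3 • v₄ := by
        rw [hcomb, show a 0 = 0 from h0]; module
      rw [h5]
      exact mem_span_three _ _ _ (by have : a 0 = 0 := h0; linarith)
    have hy : b.coord 0 v₁ ≠ 0 := by rw [← hb0, b.coord_apply_eq]; norm_num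
    have hlt := sSameSide_mul_pos _ hf hD hx hy
    rw [← hb0, b.coord_apply_eq] at hlt
    have : 0 < a 0 * 1 := hlt
    linarith
  -- the piercing point
  set s : ℝ := a 0 + a 1 with hs
  have hspos : 0 < s := by positivity
  set p : EuclideanSpace ℝ (Fin 3) := (a 0 / s) • v₁ + (a 1 / s) • v₂ with hp
  have hwsum : (-(a 2) / s) + (-(a 3) / s) + (1 / s) = 1 := by
    rw [← add_div, ← add_div]
    rw [show -(a 2) + -(a 3) + 1 = s by linarith]
    exact div_self hspos.ne'
  have hkey : p = (-(a 2) / s) • v₃ + (-(a 3) / s) • v₄ + (1 / s) • v₅ := by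
    rw [hp, hcomb]
    match_scalars <;> field_simp <;> ring
  -- p is on the open segment
  have hseg : p ∈ openSegment ℝ v₁ v₂ :=
    ⟨a 0 / s, a 1 / s, by positivity, by positivity, by field_simp; exact hs.symm, rfl⟩
  -- setup for the intrinsic interior
  set T : Set (EuclideanSpace ℝ (Fin 3)) :=
    convexHull ℝ ({v₃, v₄, v₅} : Set (EuclideanSpace ℝ (Fin 3))) with hT
  have hspan : affineSpan ℝ T = affineSpan ℝ ({v₃, v₄, v₅} : Set (EuclideanSpace ℝ (Fin 3))) :=
    affineSpan_convexHull _
  have hm3 : v₃ ∈ affineSpan ℝ T := by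
    rw [hspan]; exact subset_affineSpan _ _ (by simp)
  have hm4 : v₄ ∈ affineSpan ℝ T := by
    rw [hspan]; exact subset_affineSpan _ _ (by simp)
  have hm5 : v₅ ∈ affineSpan ℝ T := by
    rw [hspan]; exact subset_affineSpan _ _ (by simp)
  have hmp : p ∈ affineSpan ℝ T := by
    rw [hspan, hkey]
    exact mem_span_three _ _ _ hwsum
  haveI : Nonempty (affineSpan ℝ T) := ⟨⟨v₃, hm3⟩⟩
  set w : Fin 3 → affineSpan ℝ T := ![⟨v₃, hm3⟩, ⟨v₄, hm4⟩, ⟨v₅, hm5⟩] with hw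
  have h345 : AffineIndependent ℝ ![v₃, v₄, v₅] := by
    have h := h₁₃₄₅.comp_embedding (⟨Fin.succ, Fin.succ_injective 3⟩ : Fin 3 ↪ Fin 4)
    have he : ![v₁, v₃, v₄, v₅] ∘ ⇑(⟨Fin.succ, Fin.succ_injective 3⟩ : Fin 3 ↪ Fin 4)
        = ![v₃, v₄, v₅] := by
      funext i
      fin_cases i <;> rfl
    rwa [he] at h
  -- isometry to the direction space
  set ψ := AffineIsometryEquiv.constVSub ℝ (⟨v₃, hm3⟩ : affineSpan ℝ T) with hψ
  set u : Fin 3 → (affineSpan ℝ T).direction := fun i => ψ (w i) with hu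
  set χ : (affineSpan ℝ T).direction →ᵃ[ℝ] EuclideanSpace ℝ (Fin 3) :=
    (affineSpan ℝ T).subtype.comp ψ.symm.toAffineEquiv.toAffineMap with hχ
  have hχinj : Function.Injective χ := by
    intro x y hxy
    have : (ψ.symm x : EuclideanSpace ℝ (Fin 3)) = (ψ.symm y : EuclideanSpace ℝ (Fin 3)) := hxy
    exact ψ.symm.injective (Subtype.coe_injective this)
  have hχu : ∀ i, χ (u i) = ![v₃, v₄, v₅] i := by
    intro i
    have : χ (u i) = ((w i : affineSpan ℝ T) : EuclideanSpace ℝ (Fin 3)) := by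
      simp [hχ, hu, AffineIsometryEquiv.symm_apply_apply]
    rw [this]
    fin_cases i <;> rfl
  have hχucomp : χ ∘ u = ![v₃, v₄, v₅] := funext hχu
  have huind : AffineIndependent ℝ u := AffineIndependent.of_comp χ (hχucomp ▸ h345)
  have hdir : Module.finrank ℝ (affineSpan ℝ T).direction = 2 := by
    rw [hspan, direction_affineSpan, ← range_three v₃ v₄ v₅]
    exact h345.finrank_vectorSpan (by simp)
  have hutop : affineSpan ℝ (Set.range u) = ⊤ := by
    rw [huind.affineSpan_eq_top_iff_card_eq_finrank_add_one]
    simp [hdir]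
  set b' : AffineBasis (Fin 3) ℝ (affineSpan ℝ T).direction := ⟨u, huind, hutop⟩ with hb'
  -- the subtype point and its image
  set p' : affineSpan ℝ T := ⟨p, hmp⟩ with hp'
  set q : (affineSpan ℝ T).direction := ψ p' with hq
  have hwts : ∑ i, ![-(a 2) / s, -(a 3) / s, 1 / s] i = 1 := by
    rw [Fin.sum_univ_three]
    simpa using hwsum
  have hqcomb : q = Finset.univ.affineCombination ℝ u ![-(a 2) / s, -(a 3) / s, 1 / s] := by
    apply hχinj
    rw [Finset.map_affineCombination _ _ _ hwts, hχucomp]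
    rw [Finset.univ.affineCombination_eq_linear_combination _ _ hwts]
    have hχq : χ q = p := by
      simp [hχ, hq, AffineIsometryEquiv.symm_apply_apply, hp']
    rw [hχq, hkey]
    simp [Fin.sum_univ_three]
  have hcoords : ∀ i, 0 < b'.coord i q := by
    intro i
    have hb'u : ⇑b' = u := rfl
    have hcc := b'.coord_apply_combination_of_mem (Finset.mem_univ i) hwts
    rw [hb'u] at hcc
    rw [hqcomb, hcc]
    have e0 : (0:ℝ) < -(a 2) / s := div_pos (by linarith) hspos
    have e1 : (0:ℝ) < -(a 3) / s := div_pos (by linarith) hspos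
    have e2 : (0:ℝ) < 1 / s := div_pos one_pos hspos
    fin_cases i
    · exact e0
    · exact e1
    · exact e2
  have hqint : q ∈ interior (convexHull ℝ (Set.range u)) := by
    have := b'.interior_convexHull
    have hrange : Set.range ⇑b' = Set.range u := rfl
    rw [hrange] at this
    rw [this]
    exact hcoords
  -- identify the preimage of T with the convex hull of `u`
  have himg : χ '' convexHull ℝ (Set.range u) = T := by
    rw [AffineMap.image_convexHull, ← Set.range_comp, hχucomp, range_three, hT]
  have hpre : ((↑) ⁻¹' T : Set (affineSpan ℝ T)) = ⇑ψ ⁻¹' (convexHull ℝ (Set.range u)) := by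
    ext x
    simp only [Set.mem_preimage]
    have h1 : ((x : EuclideanSpace ℝ (Fin 3)) ∈ T) ↔
        ((x : EuclideanSpace ℝ (Fin 3)) ∈ χ '' convexHull ℝ (Set.range u)) := by rw [himg]
    rw [h1]
    constructor
    · rintro ⟨z, hz, hzx⟩
      have hz1 : ((ψ.symm z : affineSpan ℝ T) : EuclideanSpace ℝ (Fin 3))
          = (x : EuclideanSpace ℝ (Fin 3)) := hzx
      have hz2 : ψ.symm z = x := Subtype.coe_injective hz1
      have hz3 : ψ x = z := by rw [← hz2, AffineIsometryEquiv.apply_symm_apply]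
      rwa [hz3]
    · intro hx
      refine ⟨ψ x, hx, ?_⟩
      show ((ψ.symm (ψ x) : affineSpan ℝ T) : EuclideanSpace ℝ (Fin 3)) = _
      rw [AffineIsometryEquiv.symm_apply_apply]
  have hp'int : p' ∈ interior ((↑) ⁻¹' T : Set (affineSpan ℝ T)) := by
    rw [hpre]
    have hpi := ψ.toHomeomorph.preimage_interior (convexHull ℝ (Set.range u))
    rw [AffineIsometryEquiv.coe_toHomeomorph] at hpi
    rw [← hpi]
    exact Set.mem_preimage.mpr (hq ▸ hqint)
  apply Set.Nonempty.ne_empty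
  exact ⟨p, hseg, mem_intrinsicInterior.mpr ⟨p', hp'int, rfl⟩⟩
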